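/- Let s ∈ (1/2, 1) and let u : [0, 2π] → ℝ be measurable with mean zero, i.e. ∫₀^{2π} u(t) dt = 0. Then ∫₀^{2π} |u(t)|² dt ≤ (2π)^{2s} ∫₀^{2π} ∫₀^{2π} |u(t) - u(y)|² / |t - y|^{1+2s} dy dt. -/

import Mathlib

open MeasureTheory Real Set

/-- Fractional Poincaré inequality: for a mean-zero function on (0,2π),
`∫ |u|² ≤ (2π)^{2s} [u]²_{H^s(0,2π)}`. -/
theorem fractional_poincare
    (s : ℝ) (hs : s ∈ Set.Ioo (1/2 : ℝ) 1)
    (u : ℝ → ℝ) (hmeas : Measurable u)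
    (hint : IntegrableOn u (Set.Ioc 0 (2 * π)))
    (hint2 : IntegrableOn (fun t => u t ^ 2) (Set.Ioc 0 (2 * π)))
    (hker : IntegrableOn
      (fun p : ℝ × ℝ => (u p.1 - u p.2) ^ 2 / |p.1 - p.2| ^ (1 + 2 * s))
      ((Set.Ioc 0 (2 * π)) ×ˢ (Set.Ioc 0 (2 * π))))
    (hmean : ∫ t in Set.Ioc 0 (2 * π), u t = 0) :
    ∫ t in Set.Ioc 0 (2 * π), |u t| ^ 2 ≤
      (2 * π) ^ (2 * s) *
        ∫ t in Set.Ioc 0 (2 * π), ∫ y in Set.Ioc 0 (2 * π),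
          |u t - u y| ^ 2 / |t - y| ^ (1 + 2 * s) := by
  simp only [sq_abs]
  set a := 2 * π with ha_def
  have hapos : 0 < a := by positivity
  set K := Set.Ioc (0:ℝ) a with hK_def
  set p := 1 + 2 * s with hp_def
  have hppos : 0 < p := by nlinarith [hs.1]
  set C := ∫ t in K, u t ^ 2 with hC_def
  have hCnn : 0 ≤ C := setIntegral_nonneg measurableSet_Ioc (fun x _ => sq_nonneg _)
  have hvolK : volume K < ⊤ := measure_Ioc_lt_top
  have hvol : (volume K).toReal = a := by
    simp [hK_def, Real.volume_Ioc, ENNReal.toReal_ofReal hapos.le]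
  -- integrability of sections of (u t - u y)^2
  have hIntSec : ∀ t : ℝ, IntegrableOn (fun y => (u t - u y) ^ 2) K := by
    intro t
    have h : (fun y => (u t - u y) ^ 2)
        = fun y => (u t ^ 2 - 2 * u t * u y) + u y ^ 2 := by
      funext y; ring
    rw [h]
    exact ((integrableOn_const hvolK.ne).sub (hint.const_mul _)).add hint2
  -- exact value of inner integral of (u t - u y)^2
  have hInner : ∀ t : ℝ, ∫ y in K, (u t - u y) ^ 2 = a * u t ^ 2 + C := by
    intro t
    have h1 : IntegrableOn (fun y => u t ^ 2 + u y ^ 2) K :=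
      (integrableOn_const hvolK.ne).add hint2
    have h2 : IntegrableOn (fun y => 2 * u t * u y) K := hint.const_mul _
    have e2 : ∫ y in K, 2 * u t * u y = 0 := by
      rw [MeasureTheory.integral_const_mul, hmean, mul_zero]
    have e1 : ∫ y in K, (u t ^ 2 + u y ^ 2) = a * u t ^ 2 + C := by
      rw [integral_add (f := fun _ => u t ^ 2) (g := fun y => u y ^ 2) (integrableOn_const hvolK.ne) hint2, setIntegral_const, measureReal_def, hvol]
      simp [smul_eq_mul, ← hC_def]
    calc ∫ y in K, (u t - u y) ^ 2
        = ∫ y in K, ((u t ^ 2 + u y ^ 2) - 2 * u t * u y) := by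
          congr 1; funext y; ring
      _ = (∫ y in K, (u t ^ 2 + u y ^ 2)) - ∫ y in K, 2 * u t * u y := integral_sub h1 h2
      _ = a * u t ^ 2 + C := by rw [e1, e2, sub_zero]
  -- kernel as product-measure integrable
  rw [IntegrableOn, Measure.volume_eq_prod, ← Measure.prod_restrict] at hker
  -- pointwise comparison
  have hpt : ∀ t ∈ K, ∀ y ∈ K,
      (u t - u y) ^ 2 / a ^ p ≤ (u t - u y) ^ 2 / |t - y| ^ p := by
    intro t ht y hy
    rcases eq_or_ne t y with rfl | hne
    · simp
    · have habs : 0 < |t - y| := abs_pos.2 (sub_ne_zero.2 hne)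
      have hlt : |t - y| < a := by
        rw [abs_sub_lt_iff]
        constructor <;> [linarith [ht.1, ht.2, hy.1, hy.2]; linarith [ht.1, ht.2, hy.1, hy.2]]
      exact div_le_div_of_nonneg_left (sq_nonneg _) (Real.rpow_pos_of_pos habs _)
        (Real.rpow_le_rpow habs.le hlt.le hppos.le)
  -- monotonicity of iterated integrals
  have hmono : ∫ t in K, ∫ y in K, (u t - u y) ^ 2 / a ^ p
      ≤ ∫ t in K, ∫ y in K, (u t - u y) ^ 2 / |t - y| ^ p := by
    have hLint : Integrable (fun t => ∫ y in K, (u t - u y) ^ 2 / a ^ p)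
        (volume.restrict K) := by
      have h : (fun t => ∫ y in K, (u t - u y) ^ 2 / a ^ p)
          = fun t => (a * u t ^ 2 + C) / a ^ p := by
        funext t; rw [integral_div, hInner t]
      rw [h]
      exact (((hint2.const_mul a).add (integrableOn_const hvolK.ne)).div_const _)
    have hRint : Integrable (fun t => ∫ y in K, (u t - u y) ^ 2 / |t - y| ^ p)
        (volume.restrict K) := hker.integral_prod_left
    refine integral_mono_ae hLint hRint ?_
    filter_upwards [hker.prod_right_ae, ae_restrict_mem measurableSet_Ioc] with t hsec htK
    exact setIntegral_mono_on ((hIntSec t).div_const _) hsec measurableSet_Ioc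
      (fun y hy => hpt t htK y hy)
  -- value of the left iterated integral
  have hLHS : ∫ t in K, ∫ y in K, (u t - u y) ^ 2 / a ^ p = 2 * a * C / a ^ p := by
    have h : (fun t => ∫ y in K, (u t - u y) ^ 2 / a ^ p)
        = fun t => (a * u t ^ 2 + C) / a ^ p := by
      funext t; rw [integral_div, hInner t]
    rw [show (∫ t in K, ∫ y in K, (u t - u y) ^ 2 / a ^ p)
        = ∫ t in K, (a * u t ^ 2 + C) / a ^ p from by rw [h]]
    rw [integral_div, integral_add (hint2.const_mul a) (integrableOn_const hvolK.ne),
      MeasureTheory.integral_const_mul, setIntegral_const, measureReal_def, hvol]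
    simp [smul_eq_mul, ← hC_def]; ring
  -- final arithmetic
  have hkey : 2 * a * C / a ^ p ≤ ∫ t in K, ∫ y in K, (u t - u y) ^ 2 / |t - y| ^ p := by
    rw [← hLHS]; exact hmono
  have hE : a ^ (2 * s) * (2 * a * C / a ^ p) = 2 * C := by
    have h1 : a ^ (2 * s) / a ^ p = a⁻¹ := by
      rw [← Real.rpow_sub hapos, hp_def, show 2 * s - (1 + 2 * s) = -1 by ring,
        Real.rpow_neg_one]
    calc a ^ (2 * s) * (2 * a * C / a ^ p)
        = 2 * C * a * (a ^ (2 * s) / a ^ p) := by ring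
      _ = 2 * C * a * a⁻¹ := by rw [h1]
      _ = 2 * C := by field_simp
  calc C ≤ 2 * C := by linarith
    _ = a ^ (2 * s) * (2 * a * C / a ^ p) := hE.symm
    _ ≤ a ^ (2 * s) * ∫ t in K, ∫ y in K, (u t - u y) ^ 2 / |t - y| ^ p :=
        mul_le_mul_of_nonneg_left hkey (Real.rpow_nonneg hapos.le _)
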